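/- Let A be an associative algebra, let σ₁,...,σ_N ∈ A, and let u ∈ A be an element commuting with each σ_i. Then for 1 ≤ m ≤ N, E_m(σ₁+u, σ₂+u, ..., σ_N+u) = Σ_{j=0}^{m} binom(N-j, m-j) · E_j(σ₁,...,σ_N) · u^{m-j}, where E_j denotes the j-th noncommutative elementary symmetric polynomial. -/

import Mathlib

open Finset in
/-- The m-th noncommutative elementary symmetric polynomial. -/
noncomputable def esymmNC {A : Type*} [Ring A] {N : ℕ} (ω : Fin N → A) (m : ℕ) : A :=
  ∑ s ∈ Finset.powersetCard m (Finset.univ : Finset (Fin N)),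
    (((s.sort (· ≤ ·)).reverse).map ω).prod

open Finset List in
private lemma sort_insert_max {N : ℕ} (r : Finset (Fin N)) (a : Fin N)
    (ha : ∀ x ∈ r, x < a) :
    (insert a r).sort (· ≤ ·) = r.sort (· ≤ ·) ++ [a] := by
  have hna : a ∉ r := fun h => lt_irrefl a (ha a h)
  have hperm : (insert a r).sort (· ≤ ·) ~ r.sort (· ≤ ·) ++ [a] :=
    calc (insert a r).sort (· ≤ ·) ~ (insert a r).toList := Finset.sort_perm_toList _ _
      _ ~ a :: r.toList := Finset.toList_insert hna
      _ ~ a :: r.sort (· ≤ ·) := List.Perm.cons a (Finset.sort_perm_toList _ _).symm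
      _ ~ r.sort (· ≤ ·) ++ [a] := by
          simpa using (List.perm_append_comm (l₁ := [a]) (l₂ := r.sort (· ≤ ·)))
  have hs2 : (r.sort (· ≤ ·) ++ [a]).Pairwise (· ≤ ·) := by
    rw [List.pairwise_append]
    refine ⟨Finset.pairwise_sort _ _, List.pairwise_singleton _ _, ?_⟩
    intro x hx y hy
    rw [List.mem_singleton] at hy
    subst hy
    exact le_of_lt (ha x ((Finset.mem_sort _).1 hx))
  exact List.Perm.eq_of_pairwise' (Finset.pairwise_sort _ _) hs2 hperm

open Finset List in
private lemma u_comm_prod {A : Type*} [Ring A] {N : ℕ} (σ : Fin N → A) (u : A)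
    (hu : ∀ i, u * σ i = σ i * u) (l : List (Fin N)) :
    u * (l.map σ).prod = (l.map σ).prod * u := by
  have : Commute u (l.map σ).prod := by
    apply Commute.list_prod_right
    intro x hx
    obtain ⟨i, _, rfl⟩ := List.mem_map.1 hx
    exact hu i
  exact this

open Finset List in
private lemma prod_shift_list {A : Type*} [Ring A] {N : ℕ} (σ : Fin N → A) (u : A)
    (hu : ∀ i, u * σ i = σ i * u) :
    ∀ L : List (Fin N), L.Nodup → L.Pairwise (· > ·) →
      (L.map (fun i => σ i + u)).prod =
        ∑ r ∈ L.toFinset.powerset,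
          ((r.sort (· ≤ ·)).reverse.map σ).prod * u ^ (L.length - r.card) := by
  intro L
  induction L with
  | nil => simp
  | cons a L ih =>
    intro hnd hsorted
    have haL : a ∉ L := (List.nodup_cons.1 hnd).1
    have hndL : L.Nodup := (List.nodup_cons.1 hnd).2
    have hgt : ∀ b ∈ L, b < a := fun b hb => (List.pairwise_cons.1 hsorted).1 b hb
    have hsortedL : L.Pairwise (· > ·) := (List.pairwise_cons.1 hsorted).2
    have hatF : a ∉ L.toFinset := by simpa using haL
    rw [List.map_cons, List.prod_cons, ih hndL hsortedL]
    have htF : (a :: L).toFinset = insert a L.toFinset := by simp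
    rw [htF, Finset.sum_powerset_insert hatF]
    rw [add_mul, Finset.mul_sum, Finset.mul_sum]
    rw [add_comm]
    congr 1
    · -- u part
      apply Finset.sum_congr rfl
      intro r hr
      have hrcard : r.card ≤ L.length := by
        rw [← List.toFinset_card_of_nodup hndL]
        exact Finset.card_le_card (Finset.mem_powerset.1 hr)
      have hexp : (a :: L).length - r.card = (L.length - r.card) + 1 := by
        simp only [List.length_cons]; omega
      rw [hexp, pow_succ', ← mul_assoc, u_comm_prod σ u hu, mul_assoc]
    · -- σ a part
      apply Finset.sum_congr rfl
      intro r hr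
      have hrsub : r ⊆ L.toFinset := Finset.mem_powerset.1 hr
      have har : a ∉ r := fun h => hatF (hrsub h)
      have hlt : ∀ x ∈ r, x < a := fun x hx => hgt x (by simpa using hrsub hx)
      have hrcard : r.card ≤ L.length := by
        rw [← List.toFinset_card_of_nodup hndL]
        exact Finset.card_le_card hrsub
      have hexp : (a :: L).length - (insert a r).card = L.length - r.card := by
        rw [Finset.card_insert_of_notMem har]
        simp only [List.length_cons]
        omega
      rw [hexp, sort_insert_max r a hlt, List.reverse_append, List.reverse_singleton,
        List.singleton_append, List.map_cons, List.prod_cons, mul_assoc]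

open Finset in
private lemma count_supersets {N : ℕ} (r : Finset (Fin N)) (m : ℕ) (hrm : r.card ≤ m) :
    ((Finset.powersetCard m (Finset.univ : Finset (Fin N))).filter (fun s => r ⊆ s)).card
      = (N - r.card).choose (m - r.card) := by
  have h : ((Finset.powersetCard m (Finset.univ : Finset (Fin N))).filter (fun s => r ⊆ s)).card
      = (Finset.powersetCard (m - r.card) ((Finset.univ : Finset (Fin N)) \ r)).card := by
    apply Finset.card_bij' (fun s _ => s \ r) (fun t _ => t ∪ r)
    · intro s hs
      rw [Finset.mem_filter, Finset.mem_powersetCard] at hs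
      obtain ⟨⟨_, hcard⟩, hrs⟩ := hs
      rw [Finset.mem_powersetCard]
      exact ⟨Finset.sdiff_subset_sdiff (Finset.subset_univ s) le_rfl,
        by rw [Finset.card_sdiff_of_subset hrs, hcard]⟩
    · intro t ht
      rw [Finset.mem_powersetCard] at ht
      obtain ⟨hsub, hcard⟩ := ht
      have hdisj : Disjoint t r := by
        intro x hx1 hx2
        intro y hy
        have := hsub (hx1 hy)
        rw [Finset.mem_sdiff] at this
        exact absurd (hx2 hy) this.2
      rw [Finset.mem_filter, Finset.mem_powersetCard]
      refine ⟨⟨Finset.subset_univ _, ?_⟩, Finset.subset_union_right⟩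
      rw [Finset.card_union_of_disjoint hdisj, hcard]
      omega
    · intro s hs
      rw [Finset.mem_filter] at hs
      exact Finset.sdiff_union_of_subset hs.2
    · intro t ht
      rw [Finset.mem_powersetCard] at ht
      have hdisj : Disjoint t r := by
        intro x hx1 hx2
        intro y hy
        have := ht.1 (hx1 hy)
        rw [Finset.mem_sdiff] at this
        exact absurd (hx2 hy) this.2
      rw [Finset.union_sdiff_cancel_right hdisj]
  rw [h, Finset.card_powersetCard, Finset.card_sdiff_of_subset (Finset.subset_univ r),
    Finset.card_univ, Fintype.card_fin]

/-- Shifted expansion: for u commuting with each σ_i,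
E_m(σ₁+u,...,σ_N+u) = Σ_{j=0}^{m} C(N-j, m-j) E_j(σ₁,...,σ_N) u^{m-j}. -/
theorem esymmNC_shift {A : Type*} [Ring A] {N : ℕ} (σ : Fin N → A) (u : A)
    (hu : ∀ i, u * σ i = σ i * u) (m : ℕ) (hm1 : 1 ≤ m) (hm2 : m ≤ N) :
    esymmNC (fun i => σ i + u) m =
      ∑ j ∈ Finset.range (m + 1),
        ((N - j).choose (m - j) : A) * (esymmNC σ j * u ^ (m - j)) := by
  classical
  unfold esymmNC
  -- Step 1: expand each product
  have step1 : ∀ s ∈ Finset.powersetCard m (Finset.univ : Finset (Fin N)),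
      (((s.sort (· ≤ ·)).reverse).map (fun i => σ i + u)).prod =
        ∑ r ∈ s.powerset,
          ((r.sort (· ≤ ·)).reverse.map σ).prod * u ^ (m - r.card) := by
    intro s hs
    have hcard : s.card = m := (Finset.mem_powersetCard.1 hs).2
    have hnd : ((s.sort (· ≤ ·)).reverse).Nodup := List.nodup_reverse.2 (Finset.sort_nodup _ _)
    have hsorted : ((s.sort (· ≤ ·)).reverse).Pairwise (· > ·) := by
      rw [List.pairwise_reverse]
      exact (Finset.sortedLT_sort s).pairwise
    have htF : ((s.sort (· ≤ ·)).reverse).toFinset = s := by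
      rw [List.toFinset_reverse, Finset.sort_toFinset]
    have hlen : ((s.sort (· ≤ ·)).reverse).length = m := by
      rw [List.length_reverse, Finset.length_sort, hcard]
    rw [prod_shift_list σ u hu _ hnd hsorted, htF, hlen]
  rw [Finset.sum_congr rfl step1]
  -- Step 2: swap sums
  set g : Finset (Fin N) → A := fun r => ((r.sort (· ≤ ·)).reverse.map σ).prod * u ^ (m - r.card)
    with hg
  have step2 : ∑ s ∈ Finset.powersetCard m (Finset.univ : Finset (Fin N)), ∑ r ∈ s.powerset, g r
      = ∑ r ∈ (Finset.univ : Finset (Fin N)).powerset,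
          ∑ _s ∈ (Finset.powersetCard m (Finset.univ : Finset (Fin N))).filter (fun s => r ⊆ s),
            g r := by
    apply Finset.sum_comm'
    intro s r
    simp only [Finset.mem_powersetCard, Finset.mem_powerset, Finset.mem_filter]
    constructor
    · rintro ⟨⟨_, hcard⟩, hrs⟩
      exact ⟨⟨⟨Finset.subset_univ s, hcard⟩, hrs⟩, Finset.subset_univ r⟩
    · rintro ⟨⟨⟨_, hcard⟩, hrs⟩, _⟩
      exact ⟨⟨Finset.subset_univ s, hcard⟩, hrs⟩
  rw [step2]
  simp_rw [Finset.sum_const]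
  -- Step 3: split powerset by cardinality
  rw [Finset.sum_powerset]
  rw [Finset.card_univ, Fintype.card_fin]
  -- Step 4: evaluate
  have step4 : ∀ j ∈ Finset.range (N + 1),
      ∑ r ∈ Finset.powersetCard j (Finset.univ : Finset (Fin N)),
        ((Finset.powersetCard m (Finset.univ : Finset (Fin N))).filter
            (fun s => r ⊆ s)).card • g r
      = if j ≤ m then
          ((N - j).choose (m - j) : A) * (esymmNC σ j * u ^ (m - j))
        else 0 := by
    intro j _
    by_cases hjm : j ≤ m
    · rw [if_pos hjm]
      unfold esymmNC
      have heach : ∀ r ∈ Finset.powersetCard j (Finset.univ : Finset (Fin N)),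
          ((Finset.powersetCard m (Finset.univ : Finset (Fin N))).filter
              (fun s => r ⊆ s)).card • g r
            = ((N - j).choose (m - j) : A) *
                (((r.sort (· ≤ ·)).reverse.map σ).prod * u ^ (m - j)) := by
        intro r hr
        have hrcard : r.card = j := (Finset.mem_powersetCard.1 hr).2
        have hcount := count_supersets r m (hrcard ▸ hjm)
        rw [hcount, nsmul_eq_mul, hg]
        simp only [hrcard]
      rw [Finset.sum_congr rfl heach, ← Finset.mul_sum, ← Finset.sum_mul]
    · rw [if_neg hjm]
      apply Finset.sum_eq_zero
      intro r hr
      have hrcard : r.card = j := (Finset.mem_powersetCard.1 hr).2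
      have : (Finset.powersetCard m (Finset.univ : Finset (Fin N))).filter (fun s => r ⊆ s)
          = ∅ := by
        apply Finset.filter_false_of_mem
        intro s hs hrs
        have := Finset.card_le_card hrs
        rw [hrcard, (Finset.mem_powersetCard.1 hs).2] at this
        omega
      rw [this]
      simp
  rw [Finset.sum_congr rfl step4]
  rw [Finset.sum_ite, Finset.sum_const_zero, add_zero]
  have hfilter : (Finset.range (N + 1)).filter (fun j => j ≤ m) = Finset.range (m + 1) := by
    ext j
    simp only [Finset.mem_filter, Finset.mem_range]
    omega
  rw [hfilter]
  unfold esymmNC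
  rfl
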